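/- Let ḣ(X) = h(AXAᵀ + Q) where h(X) = X − XCᵀ(CXCᵀ + R + Y⁻¹)⁻¹CX. Then ḣ is monotone on positive semidefinite matrices: if 0 ≤ X₁ ≤ X₂ then ḣ(X₁) ≤ ḣ(X₂). -/

import Mathlib

open Matrix
open scoped MatrixOrder

private lemma inv_antitone {n : ℕ} {A B : Matrix (Fin n) (Fin n) ℝ}
    (hA : A.PosDef) (hB : B.PosDef) (hAB : (B - A).PosSemidef) :
    (A⁻¹ - B⁻¹).PosSemidef := by
  classical
  obtain ⟨L, hLsa, hLq, hLL⟩ := CFC.exists_sqrt_of_isSelfAdjoint_of_quasispectrumRestricts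
    (a := B - A) hAB.isHermitian (QuasispectrumRestricts.nnreal_of_nonneg hAB.nonneg)
  have hL : L.PosSemidef :=
    (nonneg_iff_isSelfAdjoint_and_quasispectrumRestricts.mpr ⟨hLsa, hLq⟩).posSemidef
  have hBeq : B = A + L * 1 * L := by
    rw [mul_one, hLL]; abel
  have hG : (1 + L * A⁻¹ * L).PosDef := by
    have : (L * A⁻¹ * L).PosSemidef := by
      have := hA.inv.posSemidef.conjTranspose_mul_mul_same (B := L)
      rwa [hL.isHermitian.eq] at this
    exact Matrix.PosDef.one.add_posSemidef this
  have hwood : B⁻¹ = A⁻¹ - A⁻¹ * L * (1⁻¹ + L * A⁻¹ * L)⁻¹ * L * A⁻¹ := by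
    rw [hBeq]
    exact Matrix.add_mul_mul_inv_eq_sub A L 1 L hA.isUnit isUnit_one
      (by rw [inv_one]; exact hG.isUnit)
  rw [inv_one] at hwood
  have key : A⁻¹ - B⁻¹ = (L * A⁻¹)ᴴ * (1 + L * A⁻¹ * L)⁻¹ * (L * A⁻¹) := by
    rw [hwood]
    have h1 : (L * A⁻¹)ᴴ = A⁻¹ * L := by
      rw [conjTranspose_mul, hL.isHermitian.eq, hA.inv.posSemidef.isHermitian.eq]
    rw [h1]
    noncomm_ring
  rw [key]
  exact hG.inv.posSemidef.conjTranspose_mul_mul_same (B := L * A⁻¹)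

private lemma h_eq {n s : ℕ} (C : Matrix (Fin s) (Fin n) ℝ)
    {P : Matrix (Fin n) (Fin n) ℝ} {S : Matrix (Fin s) (Fin s) ℝ}
    (hP : P.PosDef) (hS : S.PosDef) :
    P - P * Cᵀ * (C * P * Cᵀ + S)⁻¹ * C * P = (P⁻¹ + Cᵀ * S⁻¹ * C)⁻¹ := by
  classical
  have hPP : P⁻¹⁻¹ = P := Matrix.nonsing_inv_nonsing_inv P (isUnit_iff_isUnit_det P |>.1 hP.isUnit)
  have hCPC : (C * P * Cᵀ).PosSemidef := by
    have := hP.posSemidef.mul_mul_conjTranspose_same (B := C)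
    rwa [conjTranspose_eq_transpose_of_trivial] at this
  have hU : IsUnit (S⁻¹⁻¹ + C * P⁻¹⁻¹ * Cᵀ) := by
    rw [hPP, Matrix.nonsing_inv_nonsing_inv S (isUnit_iff_isUnit_det S |>.1 hS.isUnit)]
    exact (hS.add_posSemidef hCPC).isUnit
  have := Matrix.add_mul_mul_inv_eq_sub P⁻¹ Cᵀ S⁻¹ C hP.inv.isUnit hS.inv.isUnit hU
  rw [this, hPP, Matrix.nonsing_inv_nonsing_inv S (isUnit_iff_isUnit_det S |>.1 hS.isUnit),
    add_comm S (C * P * Cᵀ)]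

theorem hbar_monotone
    (n s : ℕ) (hn : 0 < n) (hs : 0 < s)
    (A : Matrix (Fin n) (Fin n) ℝ) (C : Matrix (Fin s) (Fin n) ℝ)
    (Q : Matrix (Fin n) (Fin n) ℝ) (R Y : Matrix (Fin s) (Fin s) ℝ)
    (hQ : Q.PosDef) (hR : R.PosDef) (hY : Y.PosDef)
    (X₁ X₂ : Matrix (Fin n) (Fin n) ℝ)
    (hX₁ : X₁.PosSemidef) (hX₂ : X₂.PosSemidef)
    (hle : (X₂ - X₁).PosSemidef) :
    (((A * X₂ * Aᵀ + Q) - (A * X₂ * Aᵀ + Q) * Cᵀ *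
        (C * (A * X₂ * Aᵀ + Q) * Cᵀ + R + Y⁻¹)⁻¹ * C * (A * X₂ * Aᵀ + Q)) -
     ((A * X₁ * Aᵀ + Q) - (A * X₁ * Aᵀ + Q) * Cᵀ *
        (C * (A * X₁ * Aᵀ + Q) * Cᵀ + R + Y⁻¹)⁻¹ * C * (A * X₁ * Aᵀ + Q))).PosSemidef := by
  classical
  set S := R + Y⁻¹ with hSdef
  set P₁ := A * X₁ * Aᵀ + Q with hP₁def
  set P₂ := A * X₂ * Aᵀ + Q with hP₂def
  have hS : S.PosDef := hR.add hY.inv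
  have hpsd : ∀ (X : Matrix (Fin n) (Fin n) ℝ), X.PosSemidef → (A * X * Aᵀ).PosSemidef := by
    intro X hX
    have := hX.mul_mul_conjTranspose_same (B := A)
    rwa [conjTranspose_eq_transpose_of_trivial] at this
  have hP₁ : P₁.PosDef := Matrix.PosDef.posSemidef_add (hpsd X₁ hX₁) hQ
  have hP₂ : P₂.PosDef := Matrix.PosDef.posSemidef_add (hpsd X₂ hX₂) hQ
  have hPle : (P₂ - P₁).PosSemidef := by
    have : P₂ - P₁ = A * (X₂ - X₁) * Aᵀ := by
      rw [hP₁def, hP₂def, Matrix.mul_sub, Matrix.sub_mul]; abel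
    rw [this]; exact hpsd _ hle
  have hK : (Cᵀ * S⁻¹ * C).PosSemidef := by
    have := hS.inv.posSemidef.conjTranspose_mul_mul_same (B := C)
    rwa [conjTranspose_eq_transpose_of_trivial] at this
  have hM₁ : (P₁⁻¹ + Cᵀ * S⁻¹ * C).PosDef := hP₁.inv.add_posSemidef hK
  have hM₂ : (P₂⁻¹ + Cᵀ * S⁻¹ * C).PosDef := hP₂.inv.add_posSemidef hK
  have hMle : ((P₁⁻¹ + Cᵀ * S⁻¹ * C) - (P₂⁻¹ + Cᵀ * S⁻¹ * C)).PosSemidef := by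
    have : (P₁⁻¹ + Cᵀ * S⁻¹ * C) - (P₂⁻¹ + Cᵀ * S⁻¹ * C) = P₁⁻¹ - P₂⁻¹ := by abel
    rw [this]; exact inv_antitone hP₁ hP₂ hPle
  have final := inv_antitone hM₂ hM₁ hMle
  have e₁ := h_eq C hP₁ hS
  have e₂ := h_eq C hP₂ hS
  rw [add_assoc (C * P₂ * Cᵀ) R Y⁻¹, add_assoc (C * P₁ * Cᵀ) R Y⁻¹, ← hSdef, e₁, e₂]
  exact final
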